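/- arXiv:1203.6262 — 2 statements merged into one kernel-verified Lean document; each statement's English description precedes it below -/
import Mathlib

section
/- The smallest face of the cone V₁ containing A[1,1,1] satisfies V₁[A[1,1,1]] = V₁ ∩ T[A[1,1,1]]. -/
open Matrix BigOperators
open scoped ComplexOrder

/-- Index set for `M₃ ⊗ M₃ ≅ M₉`: pairs `(i,k)` with `i,k ∈ Fin 3`. -/
abbrev Idx : Type := Fin 3 × Fin 3

/-- `M₃ ⊗ M₃`, identified with 9×9 complex matrices. -/
abbrev M9 : Type := Matrix Idx Idx ℂ

/-- Vectors in `ℂ³ ⊗ ℂ³ ≅ ℂ⁹`. -/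
abbrev V9 : Type := Idx → ℂ

/-- The product vector `x ⊗ y`, with entries `(x⊗y)(i,k) = x i * y k`. -/
def prodVec (x y : Fin 3 → ℂ) : V9 := fun p => x p.1 * y p.2

/-- Entrywise complex conjugate of a vector in `ℂ³`. -/
def conjVec (x : Fin 3 → ℂ) : Fin 3 → ℂ := fun i => (starRingEnd ℂ) (x i)

/-- The rank-one matrix `z z*`. -/
def rankOne (z : V9) : M9 := Matrix.vecMulVec z (fun p => (starRingEnd ℂ) (z p))

/-- The partial transpose: `A^Γ((i,k),(j,l)) = A((j,k),(i,l))`. -/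
def ptrans (A : M9) : M9 := fun p q => A (q.1, p.2) (p.1, q.2)

/-- The range of a matrix `A`, as a subspace of `ℂ⁹`. -/
noncomputable def MatRange (A : M9) : Submodule ℂ V9 := LinearMap.range A.mulVecLin

/-- `A` is separable: a finite sum of `(x⊗y)(x⊗y)*` over product vectors. -/
def IsSep (A : M9) : Prop :=
  ∃ (n : ℕ) (x y : Fin n → Fin 3 → ℂ),
    A = ∑ ι : Fin n, rankOne (prodVec (x ι) (y ι))

/-- The convex cone `V₁` of all separable matrices. -/
def V1 : Set M9 := {A | IsSep A}

/-- `A` is PPT: both `A` and `A^Γ` are positive semidefinite. -/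
def IsPPT (A : M9) : Prop := A.PosSemidef ∧ (ptrans A).PosSemidef

/-- The convex cone `𝕋` of all PPT matrices. -/
def Tcone : Set M9 := {A | IsPPT A}

/-- `F` is a face of the convex set `C`. -/
def IsFaceOf (F C : Set M9) : Prop :=
  F ⊆ C ∧ Convex ℝ F ∧
    ∀ x ∈ C, ∀ y ∈ C, ∀ t : ℝ, 0 < t → t < 1 →
      (1 - t) • x + t • y ∈ F → x ∈ F ∧ y ∈ F

/-- The smallest face of `C` containing `A`. -/
def smallestFace (C : Set M9) (A : M9) : Set M9 := ⋂₀ {F | IsFaceOf F C ∧ A ∈ F}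

/-- `P[A]`: product vectors `z` with `z z* ∈ V₁[A]`. -/
def Pvecs (A : M9) : Set V9 :=
  {z | (∃ x y : Fin 3 → ℂ, z = prodVec x y) ∧ rankOne z ∈ smallestFace V1 A}

/-- `Q[A]`: product vectors `x⊗y` with `x⊗y ∈ range A` and `x̄⊗y ∈ range A^Γ`. -/
def Qvecs (A : M9) : Set V9 :=
  {z | ∃ x y : Fin 3 → ℂ, z = prodVec x y ∧
    prodVec x y ∈ MatRange A ∧ prodVec (conjVec x) y ∈ MatRange (ptrans A)}

/-- The face `𝕋[A]` of the PPT cone determined by `A`. -/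
def TFace (A : M9) : Set M9 :=
  {B | IsPPT B ∧ MatRange B ≤ MatRange A ∧ MatRange (ptrans B) ≤ MatRange (ptrans A)}

/-- `x` is an interior point of the convex set `C`. -/
def IsInteriorPt (x : M9) (C : Set M9) : Prop :=
  x ∈ C ∧ ∀ y ∈ C, ∃ t : ℝ, 1 < t ∧ (1 - t) • y + t • x ∈ C

/-- The matrix `A[a,b,c]` of the paper. -/
def Amat (a b c : ℝ) : M9 := fun p q =>
  if p = q then
    (if p.1 = p.2 then (a : ℂ) else if p.2 = p.1 + 1 then (c : ℂ) else (b : ℂ))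
  else if p.1 = p.2 ∧ q.1 = q.2 then 1 else 0

-- chunk 1 : general lemmas
lemma rankOne_apply (z : V9) (p q : Idx) :
    rankOne z p q = z p * (starRingEnd ℂ) (z q) := rfl

lemma rankOne_mulVec (z : V9) (u : V9) :
    rankOne z *ᵥ u = (star z ⬝ᵥ u) • z := by
  funext p
  simp only [rankOne, mulVec, dotProduct, vecMulVec_apply, Pi.smul_apply, smul_eq_mul,
    Pi.star_apply]
  rw [Finset.sum_mul]
  exact Finset.sum_congr rfl fun q _ => by rw [RCLike.star_def]; ring

lemma star_dot_comm (z u : V9) :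
    star u ⬝ᵥ z = (starRingEnd ℂ) (star z ⬝ᵥ u) := by
  simp only [dotProduct, Pi.star_apply, map_sum, _root_.map_mul, RCLike.star_def,
    Complex.conj_conj]
  exact Finset.sum_congr rfl fun q _ => mul_comm _ _

lemma dot_rankOne (z : V9) (u : V9) :
    star u ⬝ᵥ (rankOne z *ᵥ u) =
      ((Complex.normSq (star z ⬝ᵥ u) : ℝ) : ℂ) := by
  rw [rankOne_mulVec, dotProduct_smul, smul_eq_mul, star_dot_comm, mul_comm,
    Complex.mul_conj, Complex.normSq_conj]

lemma rankOne_psd (z : V9) : (rankOne z).PosSemidef := by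
  rw [Matrix.posSemidef_iff_dotProduct_mulVec]
  constructor
  · ext p q
    simp [rankOne, conjTranspose_apply, vecMulVec_apply, mul_comm]
  · intro u
    rw [dot_rankOne]
    exact Complex.zero_le_real.mpr (Complex.normSq_nonneg _)

lemma psd_sum {n : ℕ} (M : Fin n → M9) (h : ∀ ι, (M ι).PosSemidef) :
    (∑ ι, M ι).PosSemidef := by
  induction n with
  | zero => simpa using Matrix.PosSemidef.zero
  | succ m ih =>
      rw [Fin.sum_univ_succ]
      exact ((h 0).add (ih _ (fun ι => h ι.succ)))

lemma ptrans_rankOne (x y : Fin 3 → ℂ) :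
    ptrans (rankOne (prodVec x y)) = rankOne (prodVec (conjVec x) y) := by
  ext p q
  simp only [ptrans, rankOne, prodVec, conjVec, vecMulVec_apply, _root_.map_mul,
    Complex.conj_conj]
  ring

lemma ptrans_sum {n : ℕ} (M : Fin n → M9) : ptrans (∑ ι, M ι) = ∑ ι, ptrans (M ι) := by
  ext p q
  simp [ptrans, Matrix.sum_apply]

lemma ptrans_combo (x y : M9) (s t : ℝ) :
    ptrans (s • x + t • y) = s • ptrans x + t • ptrans y := by
  ext p q
  simp [ptrans]

lemma sep_ppt {B : M9} (hB : IsSep B) : IsPPT B := by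
  obtain ⟨n, x, y, rfl⟩ := hB
  constructor
  · exact psd_sum _ fun ι => rankOne_psd _
  · rw [ptrans_sum]
    refine psd_sum _ fun ι => ?_
    rw [ptrans_rankOne]
    exact rankOne_psd _

lemma zero_mem_V1 : (0 : M9) ∈ V1 := ⟨0, fun i => 0, fun i => 0, by simp⟩

lemma V1_add {B C : M9} (hB : B ∈ V1) (hC : C ∈ V1) : B + C ∈ V1 := by
  obtain ⟨n, x, y, rfl⟩ := hB
  obtain ⟨m, x', y', rfl⟩ := hC
  refine ⟨n + m, Fin.append x x', Fin.append y y', ?_⟩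
  rw [Fin.sum_univ_add]
  congr 1
  · exact Finset.sum_congr rfl fun i _ => by rw [Fin.append_left, Fin.append_left]
  · exact Finset.sum_congr rfl fun i _ => by rw [Fin.append_right, Fin.append_right]

lemma smul_rankOne (c : ℝ) (hc : 0 ≤ c) (x y : Fin 3 → ℂ) :
    c • rankOne (prodVec x y) =
      rankOne (prodVec (fun i => (Real.sqrt c : ℂ) * x i) y) := by
  ext p q
  simp only [rankOne, prodVec, vecMulVec_apply, Matrix.smul_apply, _root_.map_mul,
    Complex.conj_ofReal, Complex.real_smul]
  have h : ((Real.sqrt c : ℂ) * (Real.sqrt c : ℂ)) = (c : ℂ) := by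
    rw [← Complex.ofReal_mul, Real.mul_self_sqrt hc]
  linear_combination (-(1:ℂ) * x p.1 * y p.2 * (starRingEnd ℂ) (x q.1) * (starRingEnd ℂ) (y q.2)) * h

lemma V1_smul {B : M9} (c : ℝ) (hc : 0 ≤ c) (hB : B ∈ V1) : c • B ∈ V1 := by
  obtain ⟨n, x, y, rfl⟩ := hB
  refine ⟨n, fun ι i => (Real.sqrt c : ℂ) * x ι i, y, ?_⟩
  rw [Finset.smul_sum]
  exact Finset.sum_congr rfl fun ι _ => smul_rankOne c hc _ _

lemma V1_sum {n : ℕ} (M : Fin n → M9) (h : ∀ ι, M ι ∈ V1) : (∑ ι, M ι) ∈ V1 := by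
  induction n with
  | zero => simpa using zero_mem_V1
  | succ m ih =>
      rw [Fin.sum_univ_succ]
      exact V1_add (h 0) (ih _ fun ι => h ι.succ)

-- chunk 2 : explicit separable decomposition of Amat 1 1 1
abbrev GI := GaussianInt
def Ig : GI := ⟨0,1⟩
def Eg : Fin 16 → Fin 3 → ℕ := fun ι => ![0, ι.val / 4, ι.val % 4]
def xg (ι : Fin 16) : Fin 3 → GI := fun m => Ig ^ (Eg ι m)
def yg (ι : Fin 16) : Fin 3 → GI := fun m => (- Ig) ^ (Eg ι m)
def Ag : Idx → Idx → GI := fun p q =>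
  if p = q then 16
  else if p.1 = p.2 ∧ q.1 = q.2 then 16 else 0

set_option maxHeartbeats 1000000 in
lemma keyg : ∀ p q : Idx,
    Ag p q = ∑ ι : Fin 16, xg ι p.1 * yg ι p.2 * star (xg ι q.1) * star (yg ι q.2) := by
  decide

noncomputable def xc (ι : Fin 16) : Fin 3 → ℂ :=
  fun m => (1/4 : ℂ) * GaussianInt.toComplex (xg ι m)
noncomputable def yc (ι : Fin 16) : Fin 3 → ℂ := fun m => GaussianInt.toComplex (yg ι m)

lemma base : Amat 1 1 1 = ∑ ι : Fin 16, rankOne (prodVec (xc ι) (yc ι)) := by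
  ext p q
  have h := congrArg GaussianInt.toComplex (keyg p q)
  rw [map_sum] at h
  have hA : Amat 1 1 1 p q = (1/16 : ℂ) * GaussianInt.toComplex (Ag p q) := by
    simp only [Amat, Ag]
    have h16 : GaussianInt.toComplex 16 = 16 := map_ofNat _ 16
    split_ifs <;> simp [h16]
  rw [Matrix.sum_apply]
  rw [hA, h, Finset.mul_sum]
  refine Finset.sum_congr rfl fun ι _ => ?_
  simp only [rankOne, prodVec, xc, yc, Matrix.vecMulVec_apply, _root_.map_mul,
    GaussianInt.toComplex_star, map_ofNat]
  simp only [map_div₀, _root_.map_one, map_ofNat]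
  ring

lemma Amat_mem_V1 : Amat 1 1 1 ∈ V1 := ⟨16, xc, yc, base⟩

/-- product vectors twisted by a unimodular diagonal `w` -/
noncomputable def xcw (w : Fin 3 → ℂ) (ι : Fin 16) : Fin 3 → ℂ := fun m => w m * xc ι m
noncomputable def ycw (w : Fin 3 → ℂ) (ι : Fin 16) : Fin 3 → ℂ :=
  fun m => (starRingEnd ℂ) (w m) * yc ι m

lemma factor_Amat (w : Fin 3 → ℂ) (hw : ∀ i, (starRingEnd ℂ) (w i) * w i = 1) (p q : Idx) :
    (w p.1 * (starRingEnd ℂ) (w p.2) * (starRingEnd ℂ) (w q.1) * w q.2) *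
      Amat 1 1 1 p q = Amat 1 1 1 p q := by
  rcases p with ⟨i, k⟩; rcases q with ⟨j, l⟩
  simp only [Amat]
  split_ifs with h1 h2 h3 h4
  · obtain ⟨rfl, rfl⟩ := Prod.ext_iff.mp h1
    push_cast
    linear_combination ((starRingEnd ℂ) (w k) * w k) * hw i + hw k
  · obtain ⟨rfl, rfl⟩ := Prod.ext_iff.mp h1
    push_cast
    linear_combination ((starRingEnd ℂ) (w k) * w k) * hw i + hw k
  · obtain ⟨rfl, rfl⟩ := Prod.ext_iff.mp h1
    push_cast
    linear_combination ((starRingEnd ℂ) (w k) * w k) * hw i + hw k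
  · have hik : i = k := h4.1
    have hjl : j = l := h4.2
    subst hik; subst hjl
    linear_combination ((starRingEnd ℂ) (w j) * w j) * hw i + hw j
  · ring

lemma baseW (w : Fin 3 → ℂ) (hw : ∀ i, (starRingEnd ℂ) (w i) * w i = 1) :
    Amat 1 1 1 = ∑ ι : Fin 16, rankOne (prodVec (xcw w ι) (ycw w ι)) := by
  ext p q
  have hb : Amat 1 1 1 p q = ∑ ι : Fin 16, rankOne (prodVec (xc ι) (yc ι)) p q := by
    rw [base, Matrix.sum_apply]
  rw [Matrix.sum_apply]
  have hterm : ∀ ι : Fin 16, rankOne (prodVec (xcw w ι) (ycw w ι)) p q =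
      (w p.1 * (starRingEnd ℂ) (w p.2) * (starRingEnd ℂ) (w q.1) * w q.2) *
        rankOne (prodVec (xc ι) (yc ι)) p q := by
    intro ι
    simp only [rankOne, prodVec, xcw, ycw, vecMulVec_apply, _root_.map_mul, Complex.conj_conj]
    ring
  rw [Finset.sum_congr rfl fun ι _ => hterm ι, ← Finset.mul_sum, ← hb,
    factor_Amat w hw p q]

lemma head_term (w : Fin 3 → ℂ) :
    rankOne (prodVec (xcw w 0) (ycw w 0)) =
      (1/16 : ℝ) • rankOne (prodVec w (conjVec w)) := by
  have hx : ∀ m, xcw w 0 m = (1/4 : ℂ) * w m := by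
    intro m
    fin_cases m <;> simp [xcw, xc, xg, Eg, Ig] <;> ring
  have hy : ∀ m, ycw w 0 m = conjVec w m := by
    intro m
    fin_cases m <;> simp [ycw, yc, yg, Eg, Ig, conjVec]
  ext p q
  simp only [rankOne, prodVec, vecMulVec_apply, Matrix.smul_apply, hx, hy,
    Complex.real_smul, _root_.map_mul, Complex.conj_conj]
  have : ((starRingEnd ℂ) (1/4 : ℂ)) = (1/4 : ℂ) := by
    simp [Complex.ext_iff]
  rw [this]
  push_cast
  ring

lemma Asub (w : Fin 3 → ℂ) (hw : ∀ i, (starRingEnd ℂ) (w i) * w i = 1) :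
    ∃ C ∈ V1, Amat 1 1 1 = C + (1/16 : ℝ) • rankOne (prodVec w (conjVec w)) := by
  have hb := baseW w hw
  rw [Fin.sum_univ_succ] at hb
  refine ⟨∑ ι : Fin 15, rankOne (prodVec (xcw w ι.succ) (ycw w ι.succ)),
    V1_sum _ (fun ι => ⟨1, fun _ => xcw w ι.succ, fun _ => ycw w ι.succ, by
      simp⟩), ?_⟩
  rw [hb, head_term, add_comm]

-- chunk 3 : range characterizations of Amat 1 1 1 and its partial transpose
lemma fin3_mk2 (h : 2 < 3) : (⟨2, h⟩ : Fin 3) = 2 := rfl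

lemma mulVecA (u : V9) (i k : Fin 3) :
    (Amat 1 1 1 *ᵥ u) (i,k) =
      if i = k then (u (0,0) + u (1,1) + u (2,2)) else u (i,k) := by
  simp only [mulVec, dotProduct, Fintype.sum_prod_type, Fin.sum_univ_three, Amat]
  fin_cases i <;> fin_cases k <;>
    norm_num [Prod.ext_iff, Fin.ext_iff, fin3_mk2] <;> try ring

lemma mulVecPT (u : V9) (i k : Fin 3) :
    (ptrans (Amat 1 1 1) *ᵥ u) (i,k) =
      if i = k then u (i,i) else u (k,i) + u (i,k) := by
  simp only [mulVec, dotProduct, Fintype.sum_prod_type, Fin.sum_univ_three, Amat, ptrans]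
  fin_cases i <;> fin_cases k <;>
    norm_num [Prod.ext_iff, Fin.ext_iff, fin3_mk2] <;> try ring

lemma mem_MatRange_iff {A : M9} (v : V9) : v ∈ MatRange A ↔ ∃ u, A *ᵥ u = v := by
  constructor
  · rintro ⟨u, rfl⟩; exact ⟨u, rfl⟩
  · rintro ⟨u, rfl⟩; exact ⟨u, rfl⟩

lemma rangeA_iff (v : V9) :
    v ∈ MatRange (Amat 1 1 1) ↔ (v (0,0) = v (1,1) ∧ v (1,1) = v (2,2)) := by
  rw [mem_MatRange_iff]
  constructor
  · rintro ⟨u, rfl⟩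
    rw [mulVecA, mulVecA, mulVecA]
    norm_num
  · rintro ⟨h1, h2⟩
    refine ⟨fun p => if p.1 = p.2 then v (0,0) / 3 else v p, ?_⟩
    funext ⟨i, k⟩
    rw [mulVecA]
    by_cases hik : i = k
    · subst hik
      simp only [if_pos rfl]
      fin_cases i
      · norm_num; try ring
      · norm_num [fin3_mk2]; try linear_combination h1
      · norm_num [fin3_mk2]; try linear_combination h1 + h2
    · simp [hik]

lemma rangePT_iff (v : V9) :
    v ∈ MatRange (ptrans (Amat 1 1 1)) ↔
      (v (0,1) = v (1,0) ∧ v (0,2) = v (2,0) ∧ v (1,2) = v (2,1)) := by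
  rw [mem_MatRange_iff]
  constructor
  · rintro ⟨u, rfl⟩
    rw [mulVecPT, mulVecPT, mulVecPT, mulVecPT, mulVecPT, mulVecPT]
    norm_num [Fin.ext_iff]
    refine ⟨by ring, by ring, by ring⟩
  · rintro ⟨h1, h2, h3⟩
    refine ⟨fun p => if p.1 = p.2 then v p else v p / 2, ?_⟩
    funext ⟨i, k⟩
    rw [mulVecPT]
    by_cases hik : i = k
    · subst hik; simp
    · have hik' : ¬ (k = i) := fun h => hik h.symm
      simp only [if_neg hik]
      fin_cases i <;> fin_cases k <;> simp_all [fin3_mk2] <;> ring_nf <;>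
        first
          | linear_combination h1 / 2
          | linear_combination h2 / 2
          | linear_combination h3 / 2
          | linear_combination (-h1) / 2
          | linear_combination (-h2) / 2
          | linear_combination (-h3) / 2
          | skip

-- chunk 4 : constraint machinery
lemma herm_dot_zero {X : M9} (hX : X.PosSemidef) (f : V9)
    (h : star f ⬝ᵥ (X *ᵥ f) = 0) : ∀ u, star f ⬝ᵥ (X *ᵥ u) = 0 := by
  have h0 : X *ᵥ f = 0 := (hX.dotProduct_mulVec_zero_iff f).mp h
  intro u
  rw [dotProduct_mulVec]
  have hvm : star f ᵥ* X = star (X *ᵥ f) := by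
    rw [star_mulVec, hX.1]
  rw [hvm, h0]
  simp

lemma sumM_mulVec {n : ℕ} (M : Fin n → M9) (f : V9) :
    (∑ ι, M ι) *ᵥ f = ∑ ι, (M ι *ᵥ f) := by
  funext p
  simp only [mulVec, dotProduct, Matrix.sum_apply, Finset.sum_apply, Finset.sum_mul]
  exact Finset.sum_comm

lemma sum_rankOne_dot {n : ℕ} (z : Fin n → V9) (f : V9)
    (h : star f ⬝ᵥ ((∑ ι, rankOne (z ι)) *ᵥ f) = 0) :
    ∀ ι, star (z ι) ⬝ᵥ f = 0 := by
  have hexp : star f ⬝ᵥ ((∑ ι, rankOne (z ι)) *ᵥ f)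
      = ∑ ι, ((Complex.normSq (star (z ι) ⬝ᵥ f) : ℝ) : ℂ) := by
    rw [sumM_mulVec]
    have : star f ⬝ᵥ ∑ ι : Fin n, rankOne (z ι) *ᵥ f
        = ∑ ι : Fin n, star f ⬝ᵥ (rankOne (z ι) *ᵥ f) := by
      simp only [dotProduct, Finset.sum_apply, Finset.mul_sum]
      exact Finset.sum_comm
    rw [this]
    exact Finset.sum_congr rfl fun ι _ => dot_rankOne (z ι) f
  rw [hexp] at h
  have h' := congrArg Complex.re h
  rw [Complex.re_sum] at h'
  simp only [Complex.ofReal_re, Complex.zero_re] at h'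
  have hz : ∀ ι ∈ Finset.univ, Complex.normSq (star (z ι) ⬝ᵥ f) = 0 := by
    rw [← Finset.sum_eq_zero_iff_of_nonneg (fun ι _ => Complex.normSq_nonneg _)]
    exact h'
  intro ι
  exact Complex.normSq_eq_zero.mp (hz ι (Finset.mem_univ ι))

-- chunk 5 : constraint vectors and product-vector classification
def dvec (p q : Idx) : V9 := fun r => if r = p then 1 else if r = q then -1 else 0

lemma star_dvec_dot (p q : Idx) (hpq : p ≠ q) (v : V9) :
    star (dvec p q) ⬝ᵥ v = v p - v q := by
  have hterm : ∀ r : Idx, star (dvec p q) r * v r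
      = (if r = p then v r else 0) + (if r = q then -(v r) else 0) := by
    intro r
    simp only [Pi.star_apply, dvec]
    by_cases h : r = p
    · subst h; simp [hpq]
    · by_cases h' : r = q
      · subst h'; simp [h]
      · simp [h, h']
  rw [dotProduct, Finset.sum_congr rfl fun r _ => hterm r, Finset.sum_add_distrib,
    Finset.sum_ite_eq' Finset.univ p (fun r => v r),
    Finset.sum_ite_eq' Finset.univ q (fun r => -(v r))]
  simp [sub_eq_add_neg]

lemma dot_star_dvec (z : V9) (p q : Idx) (hpq : p ≠ q) :
    star z ⬝ᵥ dvec p q = (starRingEnd ℂ) (z p) - (starRingEnd ℂ) (z q) := by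
  have hterm : ∀ r : Idx, star z r * dvec p q r
      = (if r = p then (starRingEnd ℂ) (z r) else 0)
        + (if r = q then -((starRingEnd ℂ) (z r)) else 0) := by
    intro r
    simp only [Pi.star_apply, dvec]
    by_cases h : r = p
    · subst h; simp [hpq, RCLike.star_def]
    · by_cases h' : r = q
      · subst h'; simp [h, RCLike.star_def]
      · simp [h, h']
  rw [dotProduct, Finset.sum_congr rfl fun r _ => hterm r, Finset.sum_add_distrib,
    Finset.sum_ite_eq' Finset.univ p, Finset.sum_ite_eq' Finset.univ q]
  simp [sub_eq_add_neg]

lemma eq_of_star_dot_dvec {z : V9} {p q : Idx} (hpq : p ≠ q)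
    (h : star z ⬝ᵥ dvec p q = 0) : z p = z q := by
  rw [dot_star_dvec z p q hpq, sub_eq_zero] at h
  exact (starRingEnd ℂ).injective h

/-- scaling a rank one matrix -/
lemma rankOne_smul_vec (c : ℂ) (z : V9) :
    rankOne (c • z) = Complex.normSq c • rankOne z := by
  ext p q
  simp only [rankOne, vecMulVec_apply, Pi.smul_apply, smul_eq_mul, _root_.map_mul,
    Matrix.smul_apply, Complex.real_smul]
  rw [← Complex.mul_conj]
  ring

lemma Lclass (x y : Fin 3 → ℂ)
    (hd1 : x 0 * y 0 = x 1 * y 1) (hd2 : x 1 * y 1 = x 2 * y 2)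
    (hs1 : (starRingEnd ℂ) (x 0) * y 1 = (starRingEnd ℂ) (x 1) * y 0)
    (hs2 : (starRingEnd ℂ) (x 0) * y 2 = (starRingEnd ℂ) (x 2) * y 0)
    (hs3 : (starRingEnd ℂ) (x 1) * y 2 = (starRingEnd ℂ) (x 2) * y 1) :
    ∃ c : ℝ, 0 ≤ c ∧ ∃ w : Fin 3 → ℂ, (∀ i, (starRingEnd ℂ) (w i) * w i = 1) ∧
      rankOne (prodVec x y) = c • rankOne (prodVec w (conjVec w)) := by
  by_cases hx : x = 0
  · refine ⟨0, le_refl _, fun _ => 1, by simp, ?_⟩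
    ext p q
    simp [rankOne, prodVec, hx, vecMulVec_apply]
  by_cases hy : y = 0
  · refine ⟨0, le_refl _, fun _ => 1, by simp, ?_⟩
    ext p q
    simp [rankOne, prodVec, hy, vecMulVec_apply]
  obtain ⟨a, ha⟩ := Function.ne_iff.mp hx
  obtain ⟨b, hb⟩ := Function.ne_iff.mp hy
  simp only [Pi.zero_apply] at ha hb
  have hca : (starRingEnd ℂ) (x a) ≠ 0 := fun h => ha (by simpa using congrArg (starRingEnd ℂ) h)
  have hsym : ∀ i k, (starRingEnd ℂ) (x i) * y k = (starRingEnd ℂ) (x k) * y i := by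
    intro i k
    fin_cases i <;> fin_cases k <;>
      simp only [Fin.mk_zero, Fin.mk_one, fin3_mk2, Fin.isValue] <;>
      first
        | rfl | exact hs1 | exact hs2 | exact hs3
        | exact hs1.symm | exact hs2.symm | exact hs3.symm
  set μ : ℂ := y a / (starRingEnd ℂ) (x a) with hμ
  have hμy : ∀ k, y k = μ * (starRingEnd ℂ) (x k) := by
    intro k
    rw [hμ, div_mul_eq_mul_div, eq_div_iff hca]
    linear_combination hsym a k
  have hμ0 : μ ≠ 0 := by
    intro h
    apply hb
    rw [hμy b, h, zero_mul]
  have hdiag : ∀ i, x i * y i = μ * (Complex.normSq (x i) : ℂ) := by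
    intro i
    rw [hμy i, ← Complex.mul_conj]
    ring
  have hn01 : (Complex.normSq (x 0) : ℂ) = (Complex.normSq (x 1) : ℂ) :=
    mul_left_cancel₀ hμ0 (by rw [← hdiag 0, ← hdiag 1]; exact hd1)
  have hn12 : (Complex.normSq (x 1) : ℂ) = (Complex.normSq (x 2) : ℂ) :=
    mul_left_cancel₀ hμ0 (by rw [← hdiag 1, ← hdiag 2]; exact hd2)
  have hn01' : Complex.normSq (x 0) = Complex.normSq (x 1) := by exact_mod_cast hn01
  have hn12' : Complex.normSq (x 1) = Complex.normSq (x 2) := by exact_mod_cast hn12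
  set r2 : ℝ := Complex.normSq (x 0) with hr2def
  have hallr2 : ∀ i, Complex.normSq (x i) = r2 := by
    intro i
    fin_cases i
    · rfl
    · exact hn01'.symm
    · exact (hn01'.trans hn12').symm
  have hr2pos : 0 < r2 := by
    rw [← hallr2 a]
    exact Complex.normSq_pos.mpr ha
  set s : ℝ := Real.sqrt r2 with hsdef
  have hspos : 0 < s := Real.sqrt_pos.mpr hr2pos
  have hss : (s : ℂ) * (s : ℂ) = (r2 : ℂ) := by
    rw [← Complex.ofReal_mul, Real.mul_self_sqrt hr2pos.le]
  set w : Fin 3 → ℂ := fun i => x i / (s : ℂ) with hwdef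
  have hw : ∀ i, (starRingEnd ℂ) (w i) * w i = 1 := by
    intro i
    rw [hwdef]
    simp only [map_div₀, Complex.conj_ofReal]
    rw [div_mul_div_comm, hss]
    rw [show (starRingEnd ℂ) (x i) * x i = (Complex.normSq (x i) : ℂ) from by
      rw [← Complex.mul_conj]; ring]
    rw [hallr2 i, div_self (by exact_mod_cast hr2pos.ne')]
  have hprod : prodVec x y = (μ * (r2 : ℂ)) • prodVec w (conjVec w) := by
    funext p
    simp only [prodVec, conjVec, hwdef, Pi.smul_apply, smul_eq_mul, map_div₀,
      Complex.conj_ofReal]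
    rw [hμy p.2]
    field_simp
    linear_combination (x p.1 * (starRingEnd ℂ) (x p.2)) * hss
  refine ⟨Complex.normSq (μ * (r2 : ℂ)), Complex.normSq_nonneg _, w, hw, ?_⟩
  rw [hprod, rankOne_smul_vec]

-- chunk 6 : faces and assembly
lemma real_smul_vec (a : ℝ) (v : V9) : a • v = ((a : ℂ)) • v := by
  funext p
  simp [Complex.real_smul]

lemma smulR_mulVec (a : ℝ) (B : M9) (u : V9) : (a • B) *ᵥ u = a • (B *ᵥ u) :=
  Matrix.smul_mulVec a B u

lemma dots_of_rangeA {v : V9} (hv : v ∈ MatRange (Amat 1 1 1)) :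
    star (dvec (0,0) (1,1)) ⬝ᵥ v = 0 ∧ star (dvec (1,1) (2,2)) ⬝ᵥ v = 0 := by
  obtain ⟨e1, e2⟩ := (rangeA_iff v).mp hv
  rw [star_dvec_dot _ _ (by decide), star_dvec_dot _ _ (by decide)]
  exact ⟨sub_eq_zero.mpr e1, sub_eq_zero.mpr e2⟩

lemma dots_of_rangePT {v : V9} (hv : v ∈ MatRange (ptrans (Amat 1 1 1))) :
    star (dvec (0,1) (1,0)) ⬝ᵥ v = 0 ∧ star (dvec (0,2) (2,0)) ⬝ᵥ v = 0 ∧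
      star (dvec (1,2) (2,1)) ⬝ᵥ v = 0 := by
  obtain ⟨e1, e2, e3⟩ := (rangePT_iff v).mp hv
  rw [star_dvec_dot _ _ (by decide), star_dvec_dot _ _ (by decide),
    star_dvec_dot _ _ (by decide)]
  exact ⟨sub_eq_zero.mpr e1, sub_eq_zero.mpr e2, sub_eq_zero.mpr e3⟩

lemma rangeA_le_of {X : M9} (h1 : ∀ u, star (dvec (0,0) (1,1)) ⬝ᵥ (X *ᵥ u) = 0)
    (h2 : ∀ u, star (dvec (1,1) (2,2)) ⬝ᵥ (X *ᵥ u) = 0) :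
    MatRange X ≤ MatRange (Amat 1 1 1) := by
  rintro v ⟨u, rfl⟩
  rw [Matrix.mulVecLin_apply, rangeA_iff]
  constructor
  · have := h1 u; rw [star_dvec_dot _ _ (by decide)] at this; exact sub_eq_zero.mp this
  · have := h2 u; rw [star_dvec_dot _ _ (by decide)] at this; exact sub_eq_zero.mp this

lemma rangePT_le_of {X : M9} (h1 : ∀ u, star (dvec (0,1) (1,0)) ⬝ᵥ (X *ᵥ u) = 0)
    (h2 : ∀ u, star (dvec (0,2) (2,0)) ⬝ᵥ (X *ᵥ u) = 0)
    (h3 : ∀ u, star (dvec (1,2) (2,1)) ⬝ᵥ (X *ᵥ u) = 0) :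
    MatRange X ≤ MatRange (ptrans (Amat 1 1 1)) := by
  rintro v ⟨u, rfl⟩
  rw [Matrix.mulVecLin_apply, rangePT_iff]
  refine ⟨?_, ?_, ?_⟩
  · have := h1 u; rw [star_dvec_dot _ _ (by decide)] at this; exact sub_eq_zero.mp this
  · have := h2 u; rw [star_dvec_dot _ _ (by decide)] at this; exact sub_eq_zero.mp this
  · have := h3 u; rw [star_dvec_dot _ _ (by decide)] at this; exact sub_eq_zero.mp this

lemma convex_nonneg_zero {a b : ℂ} (ha : 0 ≤ a) (hb : 0 ≤ b) {t : ℝ} (ht0 : 0 < t)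
    (ht1 : t < 1) (h : ((1 - t : ℝ) : ℂ) * a + (t : ℂ) * b = 0) : a = 0 ∧ b = 0 := by
  rw [Complex.le_def] at ha hb
  simp only [Complex.zero_re, Complex.zero_im] at ha hb
  rw [Complex.ext_iff] at h
  simp only [Complex.add_re, Complex.add_im, Complex.mul_re, Complex.mul_im,
    Complex.ofReal_re, Complex.ofReal_im, Complex.zero_re, Complex.zero_im, ← ha.2, ← hb.2] at h
  obtain ⟨hre, _⟩ := h
  have hra : a.re = 0 ∧ b.re = 0 := by
    constructor <;> nlinarith [ha.1, hb.1]
  constructor <;> [exact Complex.ext hra.1 ha.2.symm; exact Complex.ext hra.2 hb.2.symm]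

lemma split_combo_dot {X Y : M9} (hXp : X.PosSemidef) (hYp : Y.PosSemidef) {t : ℝ}
    (ht0 : 0 < t) (ht1 : t < 1) (f : V9)
    (hf : star f ⬝ᵥ (((1 - t) • X + t • Y) *ᵥ f) = 0) :
    star f ⬝ᵥ (X *ᵥ f) = 0 ∧ star f ⬝ᵥ (Y *ᵥ f) = 0 := by
  have hexp : ((1 - t) • X + t • Y) *ᵥ f
      = ((1 - t : ℝ) : ℂ) • (X *ᵥ f) + ((t : ℝ) : ℂ) • (Y *ᵥ f) := by
    rw [add_mulVec, smulR_mulVec, smulR_mulVec, real_smul_vec, real_smul_vec]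
  rw [hexp, dotProduct_add, dotProduct_smul, dotProduct_smul, smul_eq_mul, smul_eq_mul] at hf
  exact convex_nonneg_zero (hXp.dotProduct_mulVec_nonneg f) (hYp.dotProduct_mulVec_nonneg f) ht0 ht1 hf

lemma memTFaceA : Amat 1 1 1 ∈ V1 ∩ TFace (Amat 1 1 1) :=
  ⟨Amat_mem_V1, sep_ppt Amat_mem_V1, le_refl _, le_refl _⟩

lemma faceVT : IsFaceOf (V1 ∩ TFace (Amat 1 1 1)) V1 := by
  refine ⟨Set.inter_subset_left, ?_, ?_⟩
  · -- convexity
    rintro B ⟨hB1, hBp, hBr, hBrt⟩ C ⟨hC1, hCp, hCr, hCrt⟩ a b ha hb hab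
    have hV1 : a • B + b • C ∈ V1 := V1_add (V1_smul a ha hB1) (V1_smul b hb hC1)
    refine ⟨hV1, sep_ppt hV1, ?_, ?_⟩
    · rintro v ⟨u, rfl⟩
      rw [Matrix.mulVecLin_apply, add_mulVec, smulR_mulVec, smulR_mulVec,
        real_smul_vec, real_smul_vec]
      exact add_mem (Submodule.smul_mem _ _ (hBr ⟨u, rfl⟩))
        (Submodule.smul_mem _ _ (hCr ⟨u, rfl⟩))
    · rintro v ⟨u, rfl⟩
      rw [Matrix.mulVecLin_apply, ptrans_combo, add_mulVec, smulR_mulVec, smulR_mulVec,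
        real_smul_vec, real_smul_vec]
      exact add_mem (Submodule.smul_mem _ _ (hBrt ⟨u, rfl⟩))
        (Submodule.smul_mem _ _ (hCrt ⟨u, rfl⟩))
  · -- face property
    rintro X hX Y hY t ht0 ht1 ⟨hSV1, hSp, hSr, hSrt⟩
    have hXp := sep_ppt hX
    have hYp := sep_ppt hY
    -- A-side constraints
    have hdA : ∀ f : V9, (∀ v ∈ MatRange (Amat 1 1 1), star f ⬝ᵥ v = 0) →
        (∀ u, star f ⬝ᵥ (X *ᵥ u) = 0) ∧ (∀ u, star f ⬝ᵥ (Y *ᵥ u) = 0) := by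
      intro f hfA
      have h0 : star f ⬝ᵥ (((1 - t) • X + t • Y) *ᵥ f) = 0 := hfA _ (hSr ⟨f, rfl⟩)
      obtain ⟨hXf, hYf⟩ := split_combo_dot hXp.1 hYp.1 ht0 ht1 f h0
      exact ⟨herm_dot_zero hXp.1 f hXf, herm_dot_zero hYp.1 f hYf⟩
    have hdPT : ∀ f : V9, (∀ v ∈ MatRange (ptrans (Amat 1 1 1)), star f ⬝ᵥ v = 0) →
        (∀ u, star f ⬝ᵥ (ptrans X *ᵥ u) = 0) ∧ (∀ u, star f ⬝ᵥ (ptrans Y *ᵥ u) = 0) := by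
      intro f hfA
      have h0 : star f ⬝ᵥ (((1 - t) • ptrans X + t • ptrans Y) *ᵥ f) = 0 := by
        rw [← ptrans_combo]
        exact hfA _ (hSrt ⟨f, rfl⟩)
      obtain ⟨hXf, hYf⟩ := split_combo_dot hXp.2 hYp.2 ht0 ht1 f h0
      exact ⟨herm_dot_zero hXp.2 f hXf, herm_dot_zero hYp.2 f hYf⟩
    have hA1 := hdA (dvec (0,0) (1,1)) (fun v hv => (dots_of_rangeA hv).1)
    have hA2 := hdA (dvec (1,1) (2,2)) (fun v hv => (dots_of_rangeA hv).2)
    have hP1 := hdPT (dvec (0,1) (1,0)) (fun v hv => (dots_of_rangePT hv).1)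
    have hP2 := hdPT (dvec (0,2) (2,0)) (fun v hv => (dots_of_rangePT hv).2.1)
    have hP3 := hdPT (dvec (1,2) (2,1)) (fun v hv => (dots_of_rangePT hv).2.2)
    exact ⟨⟨hX, hXp, rangeA_le_of hA1.1 hA2.1, rangePT_le_of hP1.1 hP2.1 hP3.1⟩,
      ⟨hY, hYp, rangeA_le_of hA1.2 hA2.2, rangePT_le_of hP1.2 hP2.2 hP3.2⟩⟩

lemma face_smul {F : Set M9} (hF : IsFaceOf F V1) {x : M9} (hx : x ∈ F) (c : ℝ)
    (hc : 0 < c) : c • x ∈ F := by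
  obtain ⟨hsub, hconv, hface⟩ := hF
  rcases lt_trichotomy c 1 with h | h | h
  · have hcx : c • x ∈ V1 := V1_smul c hc.le (hsub hx)
    have hdx : (2 - c) • x ∈ V1 := V1_smul _ (by linarith) (hsub hx)
    have hcomb : (1 - (1/2 : ℝ)) • (c • x) + (1/2 : ℝ) • ((2 - c) • x) = x := by
      rw [smul_smul, smul_smul, ← add_smul,
        show (1 - 1/2 : ℝ) * c + 1/2 * (2 - c) = 1 by ring, one_smul]
    exact (hface _ hcx _ hdx (1/2) (by norm_num) (by norm_num)
      (by rw [hcomb]; exact hx)).1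
  · rw [h, one_smul]; exact hx
  · have hcx : c • x ∈ V1 := V1_smul c hc.le (hsub hx)
    have hcomb : (1 - (1 - 1/c : ℝ)) • (c • x) + (1 - 1/c : ℝ) • (0 : M9) = x := by
      rw [smul_zero, add_zero, smul_smul]
      rw [show (1 - (1 - 1/c)) * c = 1 by field_simp; ring]
      rw [one_smul]
    have ht0 : 0 < 1 - 1/c := by
      have : 1/c < 1 := by
        rw [div_lt_one (by linarith)]; linarith
      linarith
    have ht1 : 1 - 1/c < 1 := by
      have : 0 < 1/c := by positivity
      linarith
    exact (hface _ hcx _ zero_mem_V1 _ ht0 ht1 (by rw [hcomb]; exact hx)).1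

lemma mem_face_of_dilate {F : Set M9} (hF : IsFaceOf F V1) {A B C : M9} (hA : A ∈ F)
    (hB : B ∈ V1) (hC : C ∈ V1) {lam : ℝ} (hlam : 0 < lam) (heq : lam • A = C + B) :
    B ∈ F := by
  have hBc : (2/lam) • B ∈ V1 := V1_smul _ (by positivity) hB
  have hCc : (2/lam) • C ∈ V1 := V1_smul _ (by positivity) hC
  have hcomb : (1 - (1/2 : ℝ)) • ((2/lam) • B) + (1/2 : ℝ) • ((2/lam) • C) = A := by
    rw [smul_smul, smul_smul,
      show (1 - 1/2 : ℝ) * (2/lam) = 1/lam by ring,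
      show (1/2 : ℝ) * (2/lam) = 1/lam by ring,
      ← smul_add, add_comm, ← heq, smul_smul, one_div_mul_cancel (ne_of_gt hlam), one_smul]
  have h2 := (hF.2.2 _ hBc _ hCc (1/2) (by norm_num) (by norm_num)
    (by rw [hcomb]; exact hA)).1
  have h3 := face_smul hF h2 (lam/2) (by positivity)
  rw [smul_smul, show lam/2 * (2/lam) = 1 by field_simp, one_smul] at h3
  exact h3

/-- `V₁[A[1,1,1]] = V₁ ∩ 𝕋[A[1,1,1]]`. -/
theorem stmt13 : smallestFace V1 (Amat 1 1 1) = V1 ∩ TFace (Amat 1 1 1) := by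
  apply Set.Subset.antisymm
  · exact Set.sInter_subset_of_mem ⟨faceVT, memTFaceA⟩
  · rintro B ⟨hBV1, hBppt, hBr, hBrt⟩
    obtain ⟨n, xv, yv, rfl⟩ := hBV1
    set B := ∑ ι : Fin n, rankOne (prodVec (xv ι) (yv ι)) with hBdef
    have hBV1 : B ∈ V1 := ⟨n, xv, yv, hBdef⟩
    -- the partial transpose as a sum of rank ones
    have hPT : ptrans B = ∑ ι : Fin n, rankOne (prodVec (conjVec (xv ι)) (yv ι)) := by
      rw [hBdef, ptrans_sum]
      exact Finset.sum_congr rfl fun ι _ => ptrans_rankOne _ _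
    -- constraint equations for each term
    have hzA1 : ∀ ι, star (prodVec (xv ι) (yv ι)) ⬝ᵥ dvec (0,0) (1,1) = 0 := by
      apply sum_rankOne_dot
      exact (dots_of_rangeA (hBr ⟨dvec (0,0) (1,1), rfl⟩)).1
    have hzA2 : ∀ ι, star (prodVec (xv ι) (yv ι)) ⬝ᵥ dvec (1,1) (2,2) = 0 := by
      apply sum_rankOne_dot
      exact (dots_of_rangeA (hBr ⟨dvec (1,1) (2,2), rfl⟩)).2
    have hzP1 : ∀ ι, star (prodVec (conjVec (xv ι)) (yv ι)) ⬝ᵥ dvec (0,1) (1,0) = 0 := by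
      apply sum_rankOne_dot
      have := (dots_of_rangePT (hBrt ⟨dvec (0,1) (1,0), rfl⟩)).1
      rwa [Matrix.mulVecLin_apply, hPT] at this
    have hzP2 : ∀ ι, star (prodVec (conjVec (xv ι)) (yv ι)) ⬝ᵥ dvec (0,2) (2,0) = 0 := by
      apply sum_rankOne_dot
      have := (dots_of_rangePT (hBrt ⟨dvec (0,2) (2,0), rfl⟩)).2.1
      rwa [Matrix.mulVecLin_apply, hPT] at this
    have hzP3 : ∀ ι, star (prodVec (conjVec (xv ι)) (yv ι)) ⬝ᵥ dvec (1,2) (2,1) = 0 := by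
      apply sum_rankOne_dot
      have := (dots_of_rangePT (hBrt ⟨dvec (1,2) (2,1), rfl⟩)).2.2
      rwa [Matrix.mulVecLin_apply, hPT] at this
    -- classification of each term
    have hclass : ∀ ι, ∃ c : ℝ, 0 ≤ c ∧ ∃ w : Fin 3 → ℂ,
        (∀ i, (starRingEnd ℂ) (w i) * w i = 1) ∧
        rankOne (prodVec (xv ι) (yv ι)) = c • rankOne (prodVec w (conjVec w)) := by
      intro ι
      refine Lclass (xv ι) (yv ι) ?_ ?_ ?_ ?_ ?_
      · exact eq_of_star_dot_dvec (by decide) (hzA1 ι)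
      · exact eq_of_star_dot_dvec (by decide) (hzA2 ι)
      · exact eq_of_star_dot_dvec (p := ((0 : Fin 3), (1 : Fin 3)))
          (q := ((1 : Fin 3), (0 : Fin 3))) (by decide) (hzP1 ι)
      · exact eq_of_star_dot_dvec (p := ((0 : Fin 3), (2 : Fin 3)))
          (q := ((2 : Fin 3), (0 : Fin 3))) (by decide) (hzP2 ι)
      · exact eq_of_star_dot_dvec (p := ((1 : Fin 3), (2 : Fin 3)))
          (q := ((2 : Fin 3), (1 : Fin 3))) (by decide) (hzP3 ι)
    choose c hc w hw hT using hclass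
    choose C hCV1 hCeq using fun ι => Asub (w ι) (hw ι)
    set lam : ℝ := 1 + ∑ ι : Fin n, 16 * c ι with hlamdef
    have hlam : 0 < lam := by
      have : 0 ≤ ∑ ι : Fin n, 16 * c ι :=
        Finset.sum_nonneg fun ι _ => by have := hc ι; linarith
      rw [hlamdef]; linarith
    have hterm : ∀ ι, (16 * c ι) • Amat 1 1 1
        = (16 * c ι) • C ι + rankOne (prodVec (xv ι) (yv ι)) := by
      intro ι
      rw [hCeq ι, smul_add, smul_smul, hT ι,
        show (16 * c ι) * (1/16 : ℝ) = c ι by ring]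
    have heq : lam • Amat 1 1 1 = (Amat 1 1 1 + ∑ ι : Fin n, (16 * c ι) • C ι) + B := by
      calc lam • Amat 1 1 1
          = (1 : ℝ) • Amat 1 1 1 + (∑ ι : Fin n, 16 * c ι) • Amat 1 1 1 := by
            rw [← add_smul, hlamdef]
        _ = Amat 1 1 1 + ∑ ι : Fin n, (16 * c ι) • Amat 1 1 1 := by
            rw [one_smul, Finset.sum_smul]
        _ = Amat 1 1 1 + ∑ ι : Fin n,
              ((16 * c ι) • C ι + rankOne (prodVec (xv ι) (yv ι))) := by
            rw [Finset.sum_congr rfl fun ι _ => hterm ι]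
        _ = (Amat 1 1 1 + ∑ ι : Fin n, (16 * c ι) • C ι) + B := by
            rw [Finset.sum_add_distrib, hBdef, add_assoc]
    have hCbig : Amat 1 1 1 + ∑ ι : Fin n, (16 * c ι) • C ι ∈ V1 :=
      V1_add Amat_mem_V1 (V1_sum _ fun ι =>
        V1_smul _ (by have := hc ι; linarith) (hCV1 ι))
    intro F hF
    exact mem_face_of_dilate hF.1 hF.2 hBV1 hCbig hlam heq
end

section
/- For all reals b > 1 and c > 1, the smallest face of the cone V₁ containing A[1, b, c] satisfies V₁[A[1, b, c]] = V₁ ∩ T[A[1, b, c]]. -/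
open Matrix BigOperators
open scoped ComplexOrder

namespace S19

lemma rankOne_apply (z : V9) (p q : Idx) :
    rankOne z p q = z p * (starRingEnd ℂ) (z q) := rfl

lemma V1_zero : (0 : M9) ∈ V1 := ⟨0, ![], ![], by simp⟩

lemma V1_rankOne (x y : Fin 3 → ℂ) : rankOne (prodVec x y) ∈ V1 :=
  ⟨1, ![x], ![y], by simp⟩

lemma V1_add {A B : M9} (hA : A ∈ V1) (hB : B ∈ V1) : A + B ∈ V1 := by
  obtain ⟨n, x, y, rfl⟩ := hA
  obtain ⟨m, x', y', rfl⟩ := hB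
  refine ⟨n + m, Fin.append x x', Fin.append y y', ?_⟩
  rw [Fin.sum_univ_add]
  congr 1 <;> exact Finset.sum_congr rfl fun i _ => by simp

lemma smul_rankOne_prodVec (c : ℝ) (hc : 0 ≤ c) (x y : Fin 3 → ℂ) :
    c • rankOne (prodVec x y)
      = rankOne (prodVec ((Real.sqrt c : ℂ) • x) y) := by
  ext p q
  simp only [Matrix.smul_apply, rankOne_apply, prodVec, Pi.smul_apply, smul_eq_mul, _root_.map_mul,
    Complex.conj_ofReal]
  rw [Complex.real_smul]
  have h : (Real.sqrt c : ℂ) * (Real.sqrt c : ℂ) = (c : ℂ) := by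
    rw [← Complex.ofReal_mul, Real.mul_self_sqrt hc]
  linear_combination (-(1:ℂ) * x p.1 * y p.2 * (starRingEnd ℂ) (x q.1) * (starRingEnd ℂ) (y q.2)) * h


lemma V1_smul {A : M9} (c : ℝ) (hc : 0 ≤ c) (hA : A ∈ V1) : c • A ∈ V1 := by
  obtain ⟨n, x, y, rfl⟩ := hA
  refine ⟨n, fun ι => (Real.sqrt c : ℂ) • x ι, y, ?_⟩
  rw [Finset.smul_sum]
  exact Finset.sum_congr rfl fun ι _ => smul_rankOne_prodVec c hc _ _

lemma V1_sum {ι : Type*} (s : Finset ι) (f : ι → M9) (h : ∀ i ∈ s, f i ∈ V1) :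
    ∑ i ∈ s, f i ∈ V1 := by
  classical
  induction s using Finset.induction_on with
  | empty => simpa using V1_zero
  | insert _ _ hx ih =>
    rw [Finset.sum_insert hx]
    exact V1_add (h _ (Finset.mem_insert_self _ _))
      (ih fun i hi => h i (Finset.mem_insert_of_mem hi))

/-! ### Phases -/

noncomputable def ph : Fin 4 → ℂ := ![1, Complex.I, -1, -Complex.I]

noncomputable def dph (jk : Fin 4 × Fin 4) : Fin 3 → ℂ := ![1, ph jk.1, ph jk.2]

noncomputable def pvec (x : Fin 3 → ℂ) (jk : Fin 4 × Fin 4) : Fin 3 → ℂ :=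
  fun i => dph jk i * x i

noncomputable def qvec (y : Fin 3 → ℂ) (jk : Fin 4 × Fin 4) : Fin 3 → ℂ :=
  fun i => (starRingEnd ℂ) (dph jk i) * y i

noncomputable def Cmat : M9 := fun p q =>
  ∑ jk : Fin 4 × Fin 4,
    dph jk p.1 * (starRingEnd ℂ) (dph jk p.2) * (starRingEnd ℂ) (dph jk q.1) * dph jk q.2

lemma sumph (P1 P2 P3 P4 : Prop) [Decidable P1] [Decidable P2] [Decidable P3] [Decidable P4] :
    ∑ j : Fin 4, (if P1 then ph j else 1) * (starRingEnd ℂ) (if P2 then ph j else 1) *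
      ((starRingEnd ℂ) (if P3 then ph j else 1) * (if P4 then ph j else 1))
    = if ((P1 ∧ P4 ↔ P2 ∧ P3) ∧ (P1 ∨ P4 ↔ P2 ∨ P3)) then 4 else 0 := by
  by_cases h1 : P1 <;> by_cases h2 : P2 <;> by_cases h3 : P3 <;> by_cases h4 : P4 <;>
    simp [h1, h2, h3, h4, ph, Fin.sum_univ_four] <;>
    norm_num [Complex.ext_iff]

lemma dph_factor (jk : Fin 4 × Fin 4) (a : Fin 3) :
    dph jk a = (if a = 1 then ph jk.1 else 1) * (if a = 2 then ph jk.2 else 1) := by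
  fin_cases a <;> simp [dph]

lemma fin3_comb (a b a' b' : Fin 3) :
    ((((a = 1 ∧ b' = 1) ↔ (b = 1 ∧ a' = 1)) ∧ ((a = 1 ∨ b' = 1) ↔ (b = 1 ∨ a' = 1))) ∧
     (((a = 2 ∧ b' = 2) ↔ (b = 2 ∧ a' = 2)) ∧ ((a = 2 ∨ b' = 2) ↔ (b = 2 ∨ a' = 2))))
    ↔ (((a, b) : Idx) = (a', b') ∨ (a = b ∧ a' = b')) := by
  revert a b a' b'
  decide

lemma Cmat_eq (p q : Idx) :
    Cmat p q = if p = q ∨ (p.1 = p.2 ∧ q.1 = q.2) then 16 else 0 := by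
  obtain ⟨a, b⟩ := p
  obtain ⟨a', b'⟩ := q
  dsimp only
  have hterm : ∀ jk : Fin 4 × Fin 4,
      dph jk a * (starRingEnd ℂ) (dph jk b) * (starRingEnd ℂ) (dph jk a') * dph jk b'
      = ((if a = 1 then ph jk.1 else 1) * (starRingEnd ℂ) (if b = 1 then ph jk.1 else 1) *
          ((starRingEnd ℂ) (if a' = 1 then ph jk.1 else 1) * (if b' = 1 then ph jk.1 else 1))) *
        ((if a = 2 then ph jk.2 else 1) * (starRingEnd ℂ) (if b = 2 then ph jk.2 else 1) *
          ((starRingEnd ℂ) (if a' = 2 then ph jk.2 else 1) * (if b' = 2 then ph jk.2 else 1))) := by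
    intro jk
    simp only [dph_factor, _root_.map_mul]
    ring
  have : Cmat (a, b) (a', b')
      = (∑ j : Fin 4, ((if a = 1 then ph j else 1) * (starRingEnd ℂ) (if b = 1 then ph j else 1) *
          ((starRingEnd ℂ) (if a' = 1 then ph j else 1) * (if b' = 1 then ph j else 1)))) *
        (∑ k : Fin 4, ((if a = 2 then ph k else 1) * (starRingEnd ℂ) (if b = 2 then ph k else 1) *
          ((starRingEnd ℂ) (if a' = 2 then ph k else 1) * (if b' = 2 then ph k else 1)))) := by
    rw [Finset.sum_mul_sum, Cmat]
    rw [← Finset.sum_product']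
    exact Finset.sum_congr rfl fun jk _ => hterm jk
  rw [this, sumph, sumph]
  have hiff := fin3_comb a b a' b'
  split_ifs with h1 h2 h3 h4 h5 h6 <;> first
    | exact absurd (hiff.mp ⟨h1, h2⟩) h3
    | exact absurd (hiff.mpr (by assumption)).2 h2
    | exact absurd (hiff.mpr (by assumption)).1 h1
    | norm_num
lemma sum_rankOne (x y : Fin 3 → ℂ) :
    ∑ jk : Fin 4 × Fin 4, rankOne (prodVec (pvec x jk) (qvec y jk))
    = fun p q => prodVec x y p * (starRingEnd ℂ) (prodVec x y q) * Cmat p q := by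
  funext p q
  rw [Matrix.sum_apply, Cmat, Finset.mul_sum]
  refine Finset.sum_congr rfl fun jk _ => ?_
  simp only [rankOne_apply, prodVec, pvec, qvec, _root_.map_mul, Complex.conj_conj]
  ring

noncomputable def Gm (x y : Fin 3 → ℂ) (δ : ℂ) : M9 := fun p q =>
  if p = q then prodVec x y p * (starRingEnd ℂ) (prodVec x y p)
  else if p.1 = p.2 ∧ q.1 = q.2 then δ * (starRingEnd ℂ) δ else 0

lemma core (x y : Fin 3 → ℂ) (δ : ℂ) (h : ∀ i, x i * y i = δ) :
    ∑ jk : Fin 4 × Fin 4, rankOne (prodVec (pvec x jk) (qvec y jk))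
    = (16 : ℂ) • Gm x y δ := by
  rw [sum_rankOne]
  funext p q
  have hdiag : ∀ r : Idx, r.1 = r.2 → prodVec x y r = δ := by
    intro r hr
    show x r.1 * y r.2 = δ
    rw [hr]
    exact h r.2
  by_cases hpq : p = q
  · subst hpq
    simp [Gm, Cmat_eq, Matrix.smul_apply]
    ring
  · by_cases hd : p.1 = p.2 ∧ q.1 = q.2
    · simp only [Matrix.smul_apply, Gm, Cmat_eq, if_neg hpq, if_pos hd,
        if_pos (Or.inr hd), hdiag p hd.1, hdiag q hd.2, smul_eq_mul]
      ring
    · have : ¬(p = q ∨ (p.1 = p.2 ∧ q.1 = q.2)) := by tauto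
      simp [Gm, Cmat_eq, if_neg hpq, if_neg hd, if_neg this]

lemma pvec_zero (x : Fin 3 → ℂ) : pvec x (0, 0) = x := by
  funext i
  fin_cases i <;> simp [pvec, dph, ph]

lemma qvec_zero (y : Fin 3 → ℂ) : qvec y (0, 0) = y := by
  funext i
  fin_cases i <;> simp [qvec, dph, ph]

lemma Gm_one : Gm (fun _ => 1) (fun _ => 1) 1 = Amat 1 1 1 := by
  funext p q
  simp only [Gm, Amat, prodVec]
  split_ifs <;> norm_num

lemma indic (r p : Idx) :
    (if r.1 = p.1 then (1:ℂ) else 0) * (if r.2 = p.2 then (1:ℂ) else 0)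
    = if r = p then 1 else 0 := by
  by_cases h1 : r.1 = p.1 <;> by_cases h2 : r.2 = p.2 <;>
    by_cases h3 : r = p <;>
    simp_all [Prod.ext_iff]

noncomputable def Dmat (d : Idx → ℝ) : M9 := fun p q => if p = q then (d p : ℂ) else 0

lemma Dmat_mem (d : Idx → ℝ) (hd : ∀ p, 0 ≤ d p) : Dmat d ∈ V1 := by
  have key : Dmat d = ∑ p : Idx, d p •
      rankOne (prodVec (fun i => if i = p.1 then 1 else 0) (fun k => if k = p.2 then 1 else 0)) := by
    funext r s
    rw [Matrix.sum_apply]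
    have hterm : ∀ p : Idx,
        (d p • rankOne (prodVec (fun i => if i = p.1 then (1:ℂ) else 0)
          (fun k => if k = p.2 then (1:ℂ) else 0))) r s
        = if r = p ∧ s = p then (d p : ℂ) else 0 := by
      intro p
      have e1 : prodVec (fun i => if i = p.1 then (1:ℂ) else 0)
          (fun k => if k = p.2 then (1:ℂ) else 0) r = if r = p then 1 else 0 := by
        show ((if r.1 = p.1 then (1:ℂ) else 0) * (if r.2 = p.2 then (1:ℂ) else 0)) = _
        exact indic r p
      have e2 : prodVec (fun i => if i = p.1 then (1:ℂ) else 0)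
          (fun k => if k = p.2 then (1:ℂ) else 0) s = if s = p then 1 else 0 := by
        show ((if s.1 = p.1 then (1:ℂ) else 0) * (if s.2 = p.2 then (1:ℂ) else 0)) = _
        exact indic s p
      rw [Matrix.smul_apply, rankOne_apply, e1, e2]
      split_ifs with h1 h2 h3 h3 <;>
        simp_all [Complex.real_smul]
    rw [Finset.sum_congr rfl fun p _ => hterm p]
    by_cases hrs : r = s
    · subst hrs
      rw [Finset.sum_eq_single_of_mem r (Finset.mem_univ r)
        (fun p _ hpr => if_neg (fun hc => hpr hc.1.symm))]
      simp [Dmat]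
    · rw [Finset.sum_eq_zero fun p _ => if_neg (fun hc => hrs (hc.1.trans hc.2.symm))]
      simp [Dmat, hrs]
  rw [key]
  exact V1_sum _ _ fun p _ => V1_smul _ (hd p) (V1_rankOne _ _)

lemma A111_mem : Amat 1 1 1 ∈ V1 := by
  have hone : ∀ i : Fin 3, (fun _ : Fin 3 => (1:ℂ)) i * (fun _ : Fin 3 => (1:ℂ)) i = 1 :=
    fun i => one_mul 1
  have hcore := core (fun _ => 1) (fun _ => 1) 1 hone
  rw [Gm_one] at hcore
  have h2 : Amat 1 1 1 = (1/16 : ℝ) •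
      ∑ jk : Fin 4 × Fin 4, rankOne (prodVec (pvec (fun _ => 1) jk) (qvec (fun _ => 1) jk)) := by
    rw [hcore]
    funext p q
    simp only [Matrix.smul_apply, smul_eq_mul, Complex.real_smul]
    push_cast
    ring
  rw [h2]
  exact V1_smul _ (by norm_num) (V1_sum _ _ fun jk _ => V1_rankOne _ _)

lemma key (b c : ℝ) (hb : 1 < b) (hc : 1 < c) (x y : Fin 3 → ℂ)
    (h01 : x 0 * y 0 = x 1 * y 1) (h12 : x 1 * y 1 = x 2 * y 2) :
    ∃ ε : ℝ, 0 < ε ∧ Amat 1 b c - ε • rankOne (prodVec x y) ∈ V1 := by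
  classical
  set δ : ℂ := x 0 * y 0 with hδ
  have hall : ∀ i : Fin 3, x i * y i = δ := by
    intro i
    fin_cases i
    · exact hδ.symm
    · exact h01.symm
    · exact (h01.trans h12).symm
  set z : V9 := prodVec x y with hz
  set S : ℝ := ∑ p : Idx, Complex.normSq (z p) with hS
  have hS0 : 0 ≤ S := Finset.sum_nonneg fun p _ => Complex.normSq_nonneg _
  have hδn : 0 ≤ Complex.normSq δ := Complex.normSq_nonneg δ
  set m₀ : ℝ := min (b - 1) (c - 1) with hm₀def
  have hm₀ : 0 < m₀ := lt_min (by linarith) (by linarith)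
  set ε : ℝ := min (m₀ / (16 * (S + 1))) (1 / (16 * (Complex.normSq δ + 1))) with hεdef
  have hε : 0 < ε := lt_min (div_pos hm₀ (by positivity)) (div_pos one_pos (by nlinarith))
  have key1 : ε * (16 * (S + 1)) ≤ m₀ := by
    have := min_le_left (m₀ / (16 * (S + 1))) (1 / (16 * (Complex.normSq δ + 1)))
    rw [← hεdef] at this
    exact (le_div_iff₀ (by positivity)).mp this
  have key2 : ε * (16 * (Complex.normSq δ + 1)) ≤ 1 := by
    have := min_le_right (m₀ / (16 * (S + 1))) (1 / (16 * (Complex.normSq δ + 1)))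
    rw [← hεdef] at this
    exact (le_div_iff₀ (by nlinarith)).mp this
  set η : ℝ := 16 * ε * Complex.normSq δ with hηdef
  have hη0 : 0 ≤ η := by positivity
  have hη1 : η ≤ 1 := by nlinarith [Complex.normSq_nonneg δ, hε.le]
  set d : Idx → ℝ := fun p =>
    (if p.1 = p.2 then 1 else if p.2 = p.1 + 1 then c else b) - (1 - η)
      - 16 * ε * Complex.normSq (z p) with hddef
  have hd : ∀ p, 0 ≤ d p := by
    intro p
    have hnp : Complex.normSq (z p) ≤ S := by
      rw [hS]
      exact Finset.single_le_sum (f := fun p => Complex.normSq (z p))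
        (fun i _ => Complex.normSq_nonneg _) (Finset.mem_univ p)
    have hnp0 : 0 ≤ Complex.normSq (z p) := Complex.normSq_nonneg _
    rw [hddef]
    dsimp only
    split_ifs with h1 h2
    · have hzp : z p = δ := by
        rw [hz]
        show x p.1 * y p.2 = δ
        rw [h1]
        exact hall p.2
      rw [hzp, hηdef]
      nlinarith [hδn, hε.le]
    · have : m₀ ≤ c - 1 := min_le_right _ _
      nlinarith [hε.le]
    · have : m₀ ≤ b - 1 := min_le_left _ _
      nlinarith [hε.le]
  have EQ : Amat 1 b c = (1 - η) • Amat 1 1 1 + Dmat d + (16 * ε) • Gm x y δ := by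
    funext p q
    simp only [Amat, Matrix.add_apply, Matrix.smul_apply, Dmat, Gm, smul_eq_mul,
      Complex.real_smul, hddef, Complex.mul_conj]
    split_ifs <;> (try rw [hηdef]) <;> push_cast <;> try ring
  refine ⟨ε, hε, ?_⟩
  have hsplit : ∑ jk : Fin 4 × Fin 4, rankOne (prodVec (pvec x jk) (qvec y jk))
      = rankOne (prodVec x y)
        + ∑ jk ∈ Finset.univ.erase ((0,0) : Fin 4 × Fin 4),
            rankOne (prodVec (pvec x jk) (qvec y jk)) := by
    rw [← Finset.add_sum_erase _ _ (Finset.mem_univ ((0,0) : Fin 4 × Fin 4)),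
      pvec_zero, qvec_zero]
  have h16s : (16 * ε : ℝ) • Gm x y δ = ε • ((16:ℂ) • Gm x y δ) := by
    funext p q
    simp only [Matrix.smul_apply, smul_eq_mul, Complex.real_smul]
    push_cast
    ring
  have hGm : (16 * ε : ℝ) • Gm x y δ
      = ε • rankOne (prodVec x y)
        + ε • ∑ jk ∈ Finset.univ.erase ((0,0) : Fin 4 × Fin 4),
            rankOne (prodVec (pvec x jk) (qvec y jk)) := by
    rw [h16s, ← core x y δ hall, hsplit, smul_add]
  have hfin : Amat 1 b c - ε • rankOne (prodVec x y)
      = (1 - η) • Amat 1 1 1 + Dmat d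
        + ε • ∑ jk ∈ Finset.univ.erase ((0,0) : Fin 4 × Fin 4),
            rankOne (prodVec (pvec x jk) (qvec y jk)) := by
    rw [EQ, hGm]
    abel
  rw [hfin]
  exact V1_add (V1_add (V1_smul _ (by linarith) A111_mem) (Dmat_mem d hd))
    (V1_smul _ hε.le (V1_sum _ _ fun jk _ => V1_rankOne _ _))

/-! ### PSD facts -/

lemma rankOne_posSemidef (z : V9) : (rankOne z).PosSemidef := by
  refine Matrix.posSemidef_iff_dotProduct_mulVec.mpr ⟨?_, ?_⟩
  · ext p q
    simp only [Matrix.conjTranspose_apply, rankOne_apply, Pi.star_apply, star_mul',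
      starRingEnd_apply, star_star]
    ring
  · intro v
    have hc : (star v) ⬝ᵥ (rankOne z *ᵥ v)
        = ∑ p : Idx, ∑ q : Idx,
            ((starRingEnd ℂ) (v p) * z p) * ((starRingEnd ℂ) (z q) * v q) := by
      simp only [dotProduct, Matrix.mulVec, rankOne_apply, Pi.star_apply,
        Finset.mul_sum, ← starRingEnd_apply]
      refine Finset.sum_congr rfl fun p _ => Finset.sum_congr rfl fun q _ => ?_
      ring
    have hfact : ∑ p : Idx, ∑ q : Idx,
            ((starRingEnd ℂ) (v p) * z p) * ((starRingEnd ℂ) (z q) * v q)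
        = star (∑ q : Idx, (starRingEnd ℂ) (z q) * v q)
            * (∑ q : Idx, (starRingEnd ℂ) (z q) * v q) := by
      rw [← starRingEnd_apply, map_sum, Finset.sum_mul_sum]
      refine Finset.sum_congr rfl fun p _ => Finset.sum_congr rfl fun q _ => ?_
      simp only [_root_.map_mul, Complex.conj_conj]
      ring
    rw [hc, hfact]
    exact star_mul_self_nonneg _

lemma posSemidef_sum {ι : Type*} (s : Finset ι) (f : ι → M9)
    (h : ∀ i ∈ s, (f i).PosSemidef) : (∑ i ∈ s, f i).PosSemidef :=
  Finset.sum_induction f _ (fun _ _ ha hb => ha.add hb) Matrix.PosSemidef.zero h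

lemma sep_posSemidef {A : M9} (hA : A ∈ V1) : A.PosSemidef := by
  obtain ⟨n, x, y, rfl⟩ := hA
  exact posSemidef_sum _ _ fun i _ => rankOne_posSemidef _

lemma ptrans_rankOne (x y : Fin 3 → ℂ) :
    ptrans (rankOne (prodVec x y)) = rankOne (prodVec (conjVec x) y) := by
  funext p q
  simp only [ptrans, rankOne_apply, prodVec, conjVec, _root_.map_mul, Complex.conj_conj]
  ring

lemma ptrans_sum {ι : Type*} (s : Finset ι) (f : ι → M9) :
    ptrans (∑ i ∈ s, f i) = ∑ i ∈ s, ptrans (f i) := by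
  funext p q
  simp [ptrans, Matrix.sum_apply]

lemma ptrans_add (A B : M9) : ptrans (A + B) = ptrans A + ptrans B := rfl

lemma ptrans_smul (t : ℝ) (A : M9) : ptrans (t • A) = t • ptrans A := rfl

lemma sep_ptrans {A : M9} (hA : A ∈ V1) : ptrans A ∈ V1 := by
  obtain ⟨n, x, y, rfl⟩ := hA
  rw [ptrans_sum]
  exact ⟨n, fun ι => conjVec (x ι), y, Finset.sum_congr rfl fun i _ => ptrans_rankOne _ _⟩

lemma sep_PPT {A : M9} (hA : A ∈ V1) : IsPPT A :=
  ⟨sep_posSemidef hA, sep_posSemidef (sep_ptrans hA)⟩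

lemma real_smul_eq (t : ℝ) (M : M9) : t • M = ((t : ℂ)) • M := by
  ext p q
  simp [Matrix.smul_apply, Complex.real_smul]

lemma posSemidef_real_smul {M : M9} (hM : M.PosSemidef) {t : ℝ} (ht : 0 ≤ t) :
    (t • M).PosSemidef := by
  rw [real_smul_eq]
  refine Matrix.posSemidef_iff_dotProduct_mulVec.mpr ⟨?_, ?_⟩
  · ext p q
    have hherm : (starRingEnd ℂ) (M q p) = M p q := by
      rw [starRingEnd_apply]
      exact hM.1.apply p q
    simp only [Matrix.conjTranspose_apply, Matrix.smul_apply, smul_eq_mul]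
    rw [← starRingEnd_apply, _root_.map_mul, Complex.conj_ofReal, hherm]
  · intro v
    rw [Matrix.smul_mulVec, dotProduct_smul, smul_eq_mul]
    exact mul_nonneg (Complex.zero_le_real.mpr ht) (hM.dotProduct_mulVec_nonneg v)

/-! ### Range lemmas -/

open scoped MatrixOrder in
lemma psd_exists_conjTranspose_mul_self {M : M9} (hM : M.PosSemidef) : ∃ B : M9, M = Bᴴ * B := by
  classical
  obtain ⟨X, hX, -, hXX⟩ := CFC.exists_sqrt_of_isSelfAdjoint_of_quasispectrumRestricts
    hM.isHermitian (QuasispectrumRestricts.nnreal_of_nonneg hM.nonneg)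
  exact ⟨X, by rw [← hXX, ← Matrix.star_eq_conjTranspose, hX.star_eq]⟩

lemma matRange_le_of_add {M N : M9} (hM : M.PosSemidef) (hN : N.PosSemidef) :
    MatRange M ≤ MatRange (M + N) := by
  obtain ⟨B, hB⟩ := psd_exists_conjTranspose_mul_self hM
  obtain ⟨C, hC⟩ := psd_exists_conjTranspose_mul_self hN
  set D : Matrix (Idx ⊕ Idx) Idx ℂ := Matrix.fromRows B C with hD
  have hDD : Dᴴ * D = M + N := by
    rw [hD, Matrix.conjTranspose_fromRows_eq_fromCols_conjTranspose,
      Matrix.fromCols_mul_fromRows, ← hB, ← hC]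
  have hle : MatRange (M + N) ≤ LinearMap.range Dᴴ.mulVecLin := by
    rw [← hDD, MatRange, Matrix.mulVecLin_mul]
    exact LinearMap.range_comp_le_range _ _
  have heq : MatRange (M + N) = LinearMap.range Dᴴ.mulVecLin := by
    apply Submodule.eq_of_le_of_finrank_le hle
    show Dᴴ.rank ≤ Module.finrank ℂ (MatRange (M + N))
    rw [MatRange, ← hDD]
    show Dᴴ.rank ≤ (Dᴴ * D).rank
    rw [Matrix.rank_conjTranspose_mul_self, Matrix.rank_conjTranspose]
  rw [heq]
  rintro v ⟨u, rfl⟩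
  refine ⟨Sum.elim (B *ᵥ u) 0, ?_⟩
  rw [Matrix.mulVecLin_apply, hD, Matrix.conjTranspose_fromRows_eq_fromCols_conjTranspose,
    Matrix.fromCols_mulVec_sumElim, Matrix.mulVec_zero, add_zero, Matrix.mulVec_mulVec,
    ← hB]
  rfl

lemma real_smul_vec (a : ℝ) (w : V9) : a • w = ((a : ℂ)) • w := by
  funext p
  simp [Complex.real_smul]

lemma mulVec_real_smul (a : ℝ) (M : M9) (u : V9) :
    (a • M) *ᵥ u = a • (M *ᵥ u) := by
  rw [real_smul_eq, real_smul_vec, Matrix.smul_mulVec]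

lemma matRange_real_smul {t : ℝ} (ht : t ≠ 0) (M : M9) : MatRange (t • M) = MatRange M := by
  apply le_antisymm
  · rintro v ⟨u, rfl⟩
    refine ⟨(t : ℂ) • u, ?_⟩
    rw [Matrix.mulVecLin_apply, Matrix.mulVecLin_apply, Matrix.mulVec_smul,
      mulVec_real_smul, real_smul_vec]
  · rintro v ⟨u, rfl⟩
    refine ⟨((t : ℂ))⁻¹ • u, ?_⟩
    rw [Matrix.mulVecLin_apply, Matrix.mulVecLin_apply, Matrix.mulVec_smul,
      mulVec_real_smul, real_smul_vec, smul_smul]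
    have : (t : ℂ) ≠ 0 := by exact_mod_cast ht
    rw [inv_mul_cancel₀ this, one_smul]

lemma matRange_comb_le {X Y A : M9} (a b : ℝ) (hX : MatRange X ≤ MatRange A)
    (hY : MatRange Y ≤ MatRange A) : MatRange (a • X + b • Y) ≤ MatRange A := by
  rintro v ⟨u, rfl⟩
  rw [Matrix.mulVecLin_apply, Matrix.add_mulVec, mulVec_real_smul, mulVec_real_smul,
    real_smul_vec, real_smul_vec]
  exact Submodule.add_mem _ (Submodule.smul_mem _ _ (hX ⟨u, rfl⟩))
    (Submodule.smul_mem _ _ (hY ⟨u, rfl⟩))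

lemma mem_matRange_rankOne {z : V9} (hz : z ≠ 0) : z ∈ MatRange (rankOne z) := by
  set s : ℂ := ∑ q : Idx, (starRingEnd ℂ) (z q) * z q with hs
  have hsr : s = ((∑ q : Idx, Complex.normSq (z q) : ℝ) : ℂ) := by
    rw [hs]
    push_cast
    exact Finset.sum_congr rfl fun q _ => by
      rw [← Complex.normSq_eq_conj_mul_self]
  have hs0 : s ≠ 0 := by
    rw [hsr]
    intro h0
    rw [Complex.ofReal_eq_zero] at h0
    have hall : ∀ q ∈ Finset.univ, Complex.normSq (z q) = 0 :=
      (Finset.sum_eq_zero_iff_of_nonneg fun q _ => Complex.normSq_nonneg _).mp h0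
    apply hz
    funext q
    exact Complex.normSq_eq_zero.mp (hall q (Finset.mem_univ q))
  have hmul : rankOne z *ᵥ z = s • z := by
    funext p
    show ∑ q : Idx, rankOne z p q * z q = s * z p
    rw [hs, Finset.sum_mul]
    exact Finset.sum_congr rfl fun q _ => by rw [rankOne_apply]; ring
  refine ⟨s⁻¹ • z, ?_⟩
  rw [Matrix.mulVecLin_apply, Matrix.mulVec_smul, hmul, smul_smul, inv_mul_cancel₀ hs0,
    one_smul]

lemma Amat_mem (b c : ℝ) (hb : 1 < b) (hc : 1 < c) : Amat 1 b c ∈ V1 := by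
  obtain ⟨ε, hε, hmem⟩ := key b c hb hc (fun _ => 0) (fun _ => 0) (by simp) (by simp)
  have hz : rankOne (prodVec (fun _ : Fin 3 => (0:ℂ)) (fun _ => 0)) = 0 := by
    funext p q
    simp [rankOne_apply, prodVec]
  rwa [hz, smul_zero, sub_zero] at hmem

lemma Amat_entry_row_diag (b c : ℝ) (i : Fin 3) (q : Idx) :
    Amat 1 b c (i, i) q = if q.1 = q.2 then 1 else 0 := by
  by_cases hq : (i, i) = q
  · rw [Amat, if_pos hq, ← hq]
    norm_num
  · rw [Amat, if_neg hq]
    simp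

lemma Amat_mulVec_diag (b c : ℝ) (u : V9) (i : Fin 3) :
    (Amat 1 b c *ᵥ u) (i, i) = ∑ j : Fin 3, u (j, j) := by
  show ∑ q : Idx, Amat 1 b c (i, i) q * u q = _
  have hterm : ∀ q : Idx, Amat 1 b c (i, i) q * u q = if q.1 = q.2 then u q else 0 := by
    intro q
    rw [Amat_entry_row_diag]
    split_ifs <;> simp
  rw [Finset.sum_congr rfl fun q _ => hterm q, Fintype.sum_prod_type]
  refine Finset.sum_congr rfl fun j _ => ?_
  simp [Finset.sum_ite_eq]

lemma diag_range {b c : ℝ} {w : V9} (hw : w ∈ MatRange (Amat 1 b c)) :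
    w (0, 0) = w (1, 1) ∧ w (1, 1) = w (2, 2) := by
  obtain ⟨u, rfl⟩ := hw
  constructor <;> show (Amat 1 b c *ᵥ u) _ = (Amat 1 b c *ᵥ u) _ <;>
    rw [Amat_mulVec_diag, Amat_mulVec_diag]

lemma sub_smul_mem_mono (A X : M9) (hA : A ∈ V1) {e e' : ℝ} (he : 0 < e) (he0 : 0 ≤ e')
    (hee : e' ≤ e) (h : A - e • X ∈ V1) : A - e' • X ∈ V1 := by
  have h1 : (e'/e) * e = e' := div_mul_cancel₀ _ he.ne'
  have hid : A - e' • X = (e'/e) • (A - e • X) + (1 - e'/e) • A := by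
    rw [smul_sub, smul_smul, h1]
    module
  rw [hid]
  refine V1_add (V1_smul _ (div_nonneg he0 he.le) h) (V1_smul _ ?_ hA)
  have : e'/e ≤ 1 := (div_le_one he).mpr hee
  linarith

lemma face_inter (b c : ℝ) (hb : 1 < b) (hc : 1 < c) :
    IsFaceOf (V1 ∩ TFace (Amat 1 b c)) V1 := by
  refine ⟨Set.inter_subset_left, ?_, ?_⟩
  · -- convexity
    intro x hx y hy a a' ha ha' haa
    refine ⟨V1_add (V1_smul a ha hx.1) (V1_smul a' ha' hy.1), ⟨?_, ?_⟩, ?_, ?_⟩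
    · exact (posSemidef_real_smul (sep_posSemidef hx.1) ha).add
        (posSemidef_real_smul (sep_posSemidef hy.1) ha')
    · rw [ptrans_add, ptrans_smul, ptrans_smul]
      exact (posSemidef_real_smul (sep_posSemidef (sep_ptrans hx.1)) ha).add
        (posSemidef_real_smul (sep_posSemidef (sep_ptrans hy.1)) ha')
    · exact matRange_comb_le a a' hx.2.2.1 hy.2.2.1
    · rw [ptrans_add, ptrans_smul, ptrans_smul]
      exact matRange_comb_le a a' hx.2.2.2 hy.2.2.2
  · -- face property
    intro x hxV y hyV t ht0 ht1 hmem
    have hxP := sep_posSemidef hxV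
    have hyP := sep_posSemidef hyV
    have hxPt := sep_posSemidef (sep_ptrans hxV)
    have hyPt := sep_posSemidef (sep_ptrans hyV)
    have h1t : (0:ℝ) < 1 - t := by linarith
    constructor
    · refine ⟨hxV, sep_PPT hxV, ?_, ?_⟩
      · have h1 : MatRange x = MatRange ((1-t) • x) := (matRange_real_smul h1t.ne' x).symm
        have h2 : MatRange ((1-t) • x) ≤ MatRange ((1-t) • x + t • y) :=
          matRange_le_of_add (posSemidef_real_smul hxP h1t.le)
            (posSemidef_real_smul hyP ht0.le)
        rw [h1]
        exact h2.trans hmem.2.2.1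
      · have h1 : MatRange (ptrans x) = MatRange ((1-t) • ptrans x) :=
          (matRange_real_smul h1t.ne' _).symm
        have h2 : MatRange ((1-t) • ptrans x) ≤ MatRange ((1-t) • ptrans x + t • ptrans y) :=
          matRange_le_of_add (posSemidef_real_smul hxPt h1t.le)
            (posSemidef_real_smul hyPt ht0.le)
        have h3 : ptrans ((1-t) • x + t • y) = (1-t) • ptrans x + t • ptrans y := by
          rw [ptrans_add, ptrans_smul, ptrans_smul]
        have h4 := hmem.2.2.2
        rw [h3] at h4
        rw [h1]
        exact h2.trans h4
    · refine ⟨hyV, sep_PPT hyV, ?_, ?_⟩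
      · have h1 : MatRange y = MatRange (t • y) := (matRange_real_smul ht0.ne' y).symm
        have h2 : MatRange (t • y) ≤ MatRange (t • y + (1-t) • x) :=
          matRange_le_of_add (posSemidef_real_smul hyP ht0.le)
            (posSemidef_real_smul hxP h1t.le)
        have h3 : (t • y + (1-t) • x) = ((1-t) • x + t • y) := add_comm _ _
        rw [h3] at h2
        rw [h1]
        exact h2.trans hmem.2.2.1
      · have h1 : MatRange (ptrans y) = MatRange (t • ptrans y) :=
          (matRange_real_smul ht0.ne' _).symm
        have h2 : MatRange (t • ptrans y) ≤ MatRange (t • ptrans y + (1-t) • ptrans x) :=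
          matRange_le_of_add (posSemidef_real_smul hyPt ht0.le)
            (posSemidef_real_smul hxPt h1t.le)
        have h3 : ptrans ((1-t) • x + t • y) = t • ptrans y + (1-t) • ptrans x := by
          rw [ptrans_add, ptrans_smul, ptrans_smul, add_comm]
        have h4 := hmem.2.2.2
        rw [h3] at h4
        rw [h1]
        exact h2.trans h4

lemma mem_face_of (b c : ℝ) (hb : 1 < b) (hc : 1 < c) {B : M9}
    (hBV : B ∈ V1) (hBr : MatRange B ≤ MatRange (Amat 1 b c))
    {F : Set M9} (hF : IsFaceOf F V1) (hAF : Amat 1 b c ∈ F) : B ∈ F := by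
  obtain ⟨hFsub, hFconv, hface⟩ := hF
  have hA1 : Amat 1 b c ∈ V1 := Amat_mem b c hb hc
  have h2A : ((2:ℝ) • Amat 1 b c) ∈ V1 := V1_smul 2 (by norm_num) hA1
  have hcomb0 : ((1:ℝ) - 1/2) • ((2:ℝ) • Amat 1 b c) + (1/2 : ℝ) • (0 : M9)
      = Amat 1 b c := by
    rw [smul_zero, add_zero, smul_smul]
    norm_num
  have h0F : (0 : M9) ∈ F :=
    (hface _ h2A 0 V1_zero (1/2) (by norm_num) (by norm_num) (by rw [hcomb0]; exact hAF)).2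
  obtain ⟨n, xs, ys, hBdec⟩ := hBV
  by_cases hn : n = 0
  · subst hn
    have : B = 0 := by
      rw [hBdec]
      simp
    rw [this]
    exact h0F
  · have hnpos : 0 < n := Nat.pos_of_ne_zero hn
    have hnR : (0:ℝ) < (n:ℝ) := by exact_mod_cast hnpos
    set zf : Fin n → V9 := fun ι => prodVec (xs ι) (ys ι) with hzf
    have hBV' : B ∈ V1 := ⟨n, xs, ys, hBdec⟩
    have hzrange : ∀ ι, zf ι ∈ MatRange (Amat 1 b c) := by
      intro ι
      by_cases hz0 : zf ι = 0
      · rw [hz0]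
        exact Submodule.zero_mem _
      · have hdecomp : B = rankOne (zf ι) + ∑ κ ∈ Finset.univ.erase ι, rankOne (zf κ) := by
          rw [hBdec, ← Finset.add_sum_erase _ _ (Finset.mem_univ ι)]
        have hle : MatRange (rankOne (zf ι)) ≤ MatRange B := by
          rw [hdecomp]
          exact matRange_le_of_add (rankOne_posSemidef _)
            (posSemidef_sum _ _ fun κ _ => rankOne_posSemidef _)
        exact hBr (hle (mem_matRange_rankOne hz0))
    have hdiag : ∀ ι, xs ι 0 * ys ι 0 = xs ι 1 * ys ι 1
        ∧ xs ι 1 * ys ι 1 = xs ι 2 * ys ι 2 := fun ι => diag_range (hzrange ι)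
    choose εf hεf hmemf using fun ι => key b c hb hc (xs ι) (ys ι) (hdiag ι).1 (hdiag ι).2
    have : Nonempty (Fin n) := ⟨⟨0, hnpos⟩⟩
    set εm : ℝ := Finset.univ.inf' Finset.univ_nonempty εf with hεm
    have hεm_pos : 0 < εm := (Finset.lt_inf'_iff _).mpr fun ι _ => hεf ι
    have hεm_le : ∀ ι, εm ≤ εf ι := fun ι => Finset.inf'_le _ (Finset.mem_univ ι)
    have hmem2 : ∀ ι, Amat 1 b c - εm • rankOne (zf ι) ∈ V1 := fun ι =>
      sub_smul_mem_mono _ _ hA1 (hεf ι) hεm_pos.le (hεm_le ι) (hmemf ι)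
    have hsum : ∑ ι : Fin n, (Amat 1 b c - εm • rankOne (zf ι))
        = (n:ℝ) • Amat 1 b c - εm • B := by
      rw [Finset.sum_sub_distrib, Finset.sum_const, Finset.card_univ, Fintype.card_fin,
        hBdec, Finset.smul_sum, ← Nat.cast_smul_eq_nsmul ℝ]
    have havg : Amat 1 b c - (εm / n) • B
        = (1/(n:ℝ)) • ∑ ι : Fin n, (Amat 1 b c - εm • rankOne (zf ι)) := by
      rw [hsum, smul_sub, smul_smul, smul_smul]
      have e1 : (1/(n:ℝ)) * n = 1 := by field_simp
      have e2 : (1/(n:ℝ)) * εm = εm / n := by ring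
      rw [e1, e2, one_smul]
    have hAsB : Amat 1 b c - (εm / n) • B ∈ V1 := by
      rw [havg]
      exact V1_smul _ (by positivity) (V1_sum _ _ fun ι _ => hmem2 ι)
    set s : ℝ := min (εm / n) (1/4) with hsdef
    have hs_pos : 0 < s := lt_min (div_pos hεm_pos hnR) (by norm_num)
    have hs14 : s ≤ 1/4 := min_le_right _ _
    have hAsB' : Amat 1 b c - s • B ∈ V1 :=
      sub_smul_mem_mono _ _ hA1 (div_pos hεm_pos hnR) hs_pos.le (min_le_left _ _) hAsB
    have hX : (2:ℝ) • (Amat 1 b c - s • B) ∈ V1 := V1_smul 2 (by norm_num) hAsB'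
    have hY : (2*s : ℝ) • B ∈ V1 := V1_smul _ (by positivity) hBV'
    have hcomb : ((1:ℝ) - 1/2) • ((2:ℝ) • (Amat 1 b c - s • B))
        + (1/2 : ℝ) • ((2*s : ℝ) • B) = Amat 1 b c := by
      rw [smul_smul, smul_smul]
      norm_num
      module
    have h2sB_F : (2*s : ℝ) • B ∈ F :=
      (hface _ hX _ hY (1/2) (by norm_num) (by norm_num) (by rw [hcomb]; exact hAF)).2
    have ht2 : (0:ℝ) < 1 - 2*s := by linarith
    have hcomb2 : ((1:ℝ) - (1 - 2*s)) • B + (1 - 2*s) • (0 : M9) = (2*s : ℝ) • B := by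
      rw [smul_zero, add_zero]
      congr 1
      ring
    exact (hface B hBV' 0 V1_zero (1 - 2*s) ht2 (by linarith)
      (by rw [hcomb2]; exact h2sB_F)).1

theorem stmt19' (b c : ℝ) (hb : 1 < b) (hc : 1 < c) :
    smallestFace V1 (Amat 1 b c) = V1 ∩ TFace (Amat 1 b c) := by
  apply Set.Subset.antisymm
  · apply Set.sInter_subset_of_mem
    refine ⟨face_inter b c hb hc, Amat_mem b c hb hc, sep_PPT (Amat_mem b c hb hc),
      le_refl _, le_refl _⟩
  · intro B hB
    rw [smallestFace]
    refine Set.mem_sInter.mpr fun F hF => ?_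
    exact mem_face_of b c hb hc hB.1 hB.2.2.1 hF.1 hF.2

end S19

/-- for `b > 1` and `c > 1`, `V₁[A[1,b,c]] = V₁ ∩ 𝕋[A[1,b,c]]`. -/
theorem stmt19 (b c : ℝ) (hb : 1 < b) (hc : 1 < c) :
    smallestFace V1 (Amat 1 b c) = V1 ∩ TFace (Amat 1 b c) := by
  exact S19.stmt19' b c hb hc
end
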